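/- If c > 2 and p ∈ (0,1), then there is a unique β̄_c ∈ (0,∞) satisfying f(2β̄_c) - f(4β̄_c)/2 = ln(1/p)/c, where f(β) = -ln(p + (1-p)e^{-β}); moreover the function β ↦ f(2β) - f(4β)/2 is strictly increasing from 0 to (ln(1/p))/2 as β goes from 0 to ∞. -/

import Mathlib

open Real Filter

lemma key_ineq (p s t : ℝ) (hp : 0 < p) (hp1 : p < 1) (hs : 0 < s) (hst : s < t) (ht : t ≤ 1) :
    (p+(1-p)*t^2)*(p+(1-p)*s)^2 < (p+(1-p)*s^2)*(p+(1-p)*t)^2 := by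
  have hs1 : 0 < 1 - s := by linarith
  have ht1 : 0 ≤ 1 - t := by linarith
  have hq : 0 < 1 - p := by linarith
  have hts : 0 < t - s := by linarith
  have ht0 : 0 < t := hs.trans hst
  have hA : 0 < (t-s)*(p*((1-p)*(t*(1-s)))) :=
    mul_pos hts (mul_pos hp (mul_pos hq (mul_pos ht0 hs1)))
  have hB : 0 ≤ (t-s)*(p*((1-p)*(s*(1-t)))) :=
    mul_nonneg hts.le (mul_nonneg hp.le (mul_nonneg hq.le (mul_nonneg hs.le ht1)))
  have hC : 0 ≤ (t-s)*(p*((1-p)*(2*p*((1-t)*(1-s))))) :=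
    mul_nonneg hts.le (mul_nonneg hp.le (mul_nonneg hq.le (mul_nonneg (by positivity) (mul_nonneg ht1 hs1.le))))
  nlinarith [hA, hB, hC]

theorem stmt_11 (p : ℝ) (hp : p ∈ Set.Ioo (0:ℝ) 1) (c : ℝ) (hc : 2 < c)
    (f : ℝ → ℝ) (hf : ∀ x, f x = -Real.log (p + (1 - p) * Real.exp (-x))) :
    (∃! β : ℝ, β ∈ Set.Ioi (0:ℝ) ∧
      f (2 * β) - f (4 * β) / 2 = Real.log (1 / p) / c) ∧
    StrictMonoOn (fun β => f (2 * β) - f (4 * β) / 2) (Set.Ici (0:ℝ)) ∧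
    f (2 * 0) - f (4 * 0) / 2 = 0 ∧
    Filter.Tendsto (fun β => f (2 * β) - f (4 * β) / 2) Filter.atTop
      (nhds (Real.log (1 / p) / 2)) := by
  obtain ⟨hp0, hp1⟩ := hp
  have hq : 0 < 1 - p := by linarith
  have upos : ∀ x : ℝ, 0 < p + (1 - p) * Real.exp x := fun x => by positivity
  -- g expressed concretely
  have hg : (fun β => f (2 * β) - f (4 * β) / 2) =
      fun β => -Real.log (p + (1-p) * Real.exp (-(2*β)))
        + Real.log (p + (1-p) * Real.exp (-(4*β))) / 2 := by
    funext β; rw [hf, hf]; ring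
  -- exp square identity
  have hsq : ∀ β : ℝ, Real.exp (-(4*β)) = (Real.exp (-(2*β)))^2 := fun β => by
    rw [sq, ← Real.exp_add]; ring_nf
  -- strict monotonicity
  have hmono : StrictMonoOn (fun β => f (2 * β) - f (4 * β) / 2) (Set.Ici (0:ℝ)) := by
    rw [hg]
    intro a ha b hb hab
    simp only
    set s := Real.exp (-(2*b)) with hsdef
    set t := Real.exp (-(2*a)) with htdef
    have hs : 0 < s := Real.exp_pos _
    have hst : s < t := Real.exp_lt_exp.2 (by simp only [Set.mem_Ici] at ha; linarith)
    have ht : t ≤ 1 := Real.exp_le_one_iff.2 (by simp only [Set.mem_Ici] at ha; linarith)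
    have key := key_ineq p s t hp0 hp1 hs hst ht
    have hUa2 : 0 < p + (1-p)*t := upos _
    have hUb2 : 0 < p + (1-p)*s := upos _
    have hUa4 : 0 < p + (1-p)*t^2 := by positivity
    have hUb4 : 0 < p + (1-p)*s^2 := by positivity
    have hlog : Real.log ((p+(1-p)*t^2)/(p+(1-p)*t)^2)
        < Real.log ((p+(1-p)*s^2)/(p+(1-p)*s)^2) := by
      apply Real.log_lt_log (by positivity)
      rw [div_lt_div_iff₀ (by positivity) (by positivity)]
      linarith [key]
    rw [Real.log_div hUa4.ne' (by positivity), Real.log_div hUb4.ne' (by positivity),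
      Real.log_pow, Real.log_pow] at hlog
    rw [hsq a, hsq b]
    push_cast at hlog
    linarith
  -- value at 0
  have h0 : f (2 * 0) - f (4 * 0) / 2 = 0 := by
    rw [hf, hf]
    norm_num
  -- tendsto
  have hexp : Tendsto (fun β : ℝ => Real.exp (-(2*β))) atTop (nhds 0) := by
    apply Real.tendsto_exp_atBot.comp
    exact tendsto_neg_atBot_iff.2 (Tendsto.const_mul_atTop two_pos tendsto_id)
  have hexp4 : Tendsto (fun β : ℝ => Real.exp (-(4*β))) atTop (nhds 0) := by
    apply Real.tendsto_exp_atBot.comp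
    exact tendsto_neg_atBot_iff.2 (Tendsto.const_mul_atTop four_pos tendsto_id)
  have hu2 : Tendsto (fun β : ℝ => p + (1-p) * Real.exp (-(2*β))) atTop (nhds p) := by
    have := (tendsto_const_nhds (x := p)).add ((tendsto_const_nhds (x := 1-p)).mul hexp)
    simpa using this
  have hu4 : Tendsto (fun β : ℝ => p + (1-p) * Real.exp (-(4*β))) atTop (nhds p) := by
    have := (tendsto_const_nhds (x := p)).add ((tendsto_const_nhds (x := 1-p)).mul hexp4)
    simpa using this
  have hlogc : ContinuousAt Real.log p := Real.continuousAt_log hp0.ne'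
  have htend : Tendsto (fun β => f (2 * β) - f (4 * β) / 2) atTop
      (nhds (Real.log (1 / p) / 2)) := by
    rw [hg]
    have h2 : Tendsto (fun β : ℝ => Real.log (p + (1-p) * Real.exp (-(2*β)))) atTop
        (nhds (Real.log p)) := hlogc.tendsto.comp hu2
    have h4 : Tendsto (fun β : ℝ => Real.log (p + (1-p) * Real.exp (-(4*β)))) atTop
        (nhds (Real.log p)) := hlogc.tendsto.comp hu4
    have := h2.neg.add (h4.div_const 2)
    convert this using 2
    rw [one_div, Real.log_inv]; ring
  refine ⟨?_, hmono, h0, htend⟩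
  -- existence and uniqueness
  have hlogp : 0 < Real.log (1 / p) := by
    rw [one_div, Real.log_inv]
    linarith [Real.log_neg hp0 hp1]
  set y := Real.log (1 / p) / c with hy
  have hy0 : 0 < y := div_pos hlogp (by linarith)
  have hyL : y < Real.log (1 / p) / 2 := div_lt_div_of_pos_left hlogp (by norm_num) hc
  have hev : ∀ᶠ β in atTop, y < f (2 * β) - f (4 * β) / 2 :=
    htend.eventually (eventually_gt_nhds hyL)
  obtain ⟨B, hB, hB0⟩ := (hev.and (eventually_ge_atTop (0:ℝ))).exists
  have hcont : Continuous (fun β => f (2 * β) - f (4 * β) / 2) := by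
    rw [hg]
    have c2 : Continuous fun β : ℝ => p + (1-p) * Real.exp (-(2*β)) := by continuity
    have c4 : Continuous fun β : ℝ => p + (1-p) * Real.exp (-(4*β)) := by continuity
    exact (c2.log (fun x => (upos _).ne')).neg.add ((c4.log (fun x => (upos _).ne')).div_const 2)
  have hivt := intermediate_value_Icc hB0 hcont.continuousOn
  have hymem : y ∈ Set.Icc (f (2*0) - f (4*0)/2) (f (2*B) - f (4*B)/2) := by
    rw [h0]; exact ⟨hy0.le, hB.le⟩
  obtain ⟨β, hβmem, hβeq⟩ := hivt hymem
  have hβpos : β ∈ Set.Ioi (0:ℝ) := by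
    rcases hβmem.1.lt_or_eq with h | h
    · exact h
    · exfalso
      subst h
      simp only at hβeq
      rw [h0] at hβeq
      linarith
  refine ⟨β, ⟨hβpos, hβeq⟩, ?_⟩
  rintro x ⟨hx, hxe⟩
  exact hmono.injOn (Set.mem_Ici.2 (le_of_lt hx)) (Set.mem_Ici.2 (le_of_lt hβpos)) (hxe.trans hβeq.symm)
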